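/- Let U_1, …, U_N be independent random variables uniformly distributed on [0,1] and U_{(i)} the i-th smallest among them. Then for every δ ∈ (0,1) and every integer N_P with 1 ≤ N_P ≤ N, P[ there exists i ∈ {1,…,N_P} with U_{(i)} ≤ (i/(e·N))·(δ/N_P)^{1/i} ] ≤ δ. -/

import Mathlib

open MeasureTheory ProbabilityTheory ENNReal

noncomputable def orderStatAsc {n : ℕ} (v : Fin n → ℝ) (i : Fin n) : ℝ :=
  v (Tuple.sort v i)

lemma core_ineq (N k NP : ℕ) (δ : ℝ) (hδ0 : 0 < δ) (hk : 1 ≤ k) (hkN : k ≤ N) :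
    (N.choose k : ℝ) * ((k / (Real.exp 1 * N)) * (δ / NP) ^ ((k:ℝ)⁻¹)) ^ k ≤ δ / NP := by
  have hN0 : (0:ℝ) < N := by exact_mod_cast Nat.lt_of_lt_of_le hk hkN
  have he : (0:ℝ) < Real.exp 1 := Real.exp_pos 1
  have hx : (0:ℝ) ≤ δ / NP := by positivity
  have hrp : ((δ / NP) ^ ((k:ℝ)⁻¹)) ^ k = δ / NP :=
    Real.rpow_inv_natCast_pow hx (by omega)
  rw [mul_pow, hrp, ← mul_assoc]
  have hf : (0:ℝ) < k.factorial := by exact_mod_cast k.factorial_pos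
  have hmain : (N.choose k : ℝ) * ((k:ℝ) / (Real.exp 1 * N)) ^ k ≤ 1 := by
    have h1 : (N.choose k : ℝ) ≤ (N:ℝ) ^ k / k.factorial := Nat.choose_le_pow_div k N
    have h2 : (k:ℝ) ^ k / k.factorial ≤ Real.exp 1 ^ k := by
      rw [Real.exp_one_pow]
      exact Real.pow_div_factorial_le_exp (k:ℝ) (by positivity) k
    have hCf : (N.choose k : ℝ) * k.factorial ≤ (N:ℝ) ^ k := (le_div_iff₀ hf).mp h1
    have hK : (k:ℝ) ^ k ≤ Real.exp 1 ^ k * k.factorial := (div_le_iff₀ hf).mp h2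
    rw [div_pow, mul_pow, ← mul_div_assoc, div_le_one (by positivity)]
    calc (N.choose k : ℝ) * (k:ℝ) ^ k
        ≤ (N.choose k : ℝ) * (Real.exp 1 ^ k * k.factorial) :=
          mul_le_mul_of_nonneg_left hK (Nat.cast_nonneg _)
      _ = Real.exp 1 ^ k * ((N.choose k : ℝ) * k.factorial) := by ring
      _ ≤ Real.exp 1 ^ k * (N:ℝ) ^ k := mul_le_mul_of_nonneg_left hCf (by positivity)
  calc (N.choose k : ℝ) * ((k:ℝ) / (Real.exp 1 * N)) ^ k * (δ / NP)
      ≤ 1 * (δ / NP) := mul_le_mul_of_nonneg_right hmain hx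
    _ = δ / NP := one_mul _

lemma orderStat_subset {n : ℕ} (v : Fin n → ℝ) (i : Fin n) (t : ℝ)
    (h : orderStatAsc v i ≤ t) :
    ∃ S : Finset (Fin n), S.card = (i : ℕ) + 1 ∧ ∀ j ∈ S, v j ≤ t := by
  refine ⟨(Finset.Iic i).image (Tuple.sort v), ?_, ?_⟩
  · rw [Finset.card_image_of_injective _ (Tuple.sort v).injective, Fin.card_Iic]
  · intro j hj
    obtain ⟨j', hj', rfl⟩ := Finset.mem_image.mp hj
    exact le_trans (Tuple.monotone_sort v (Finset.mem_Iic.mp hj')) h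

lemma card_filter_lt {N NP : ℕ} (hle : NP ≤ N) :
    (Finset.univ.filter (fun i : Fin N => (i : ℕ) < NP)).card = NP := by
  have : Finset.univ.filter (fun i : Fin N => (i : ℕ) < NP)
      = Finset.map (Fin.castLEEmb hle) Finset.univ := by
    ext j
    simp only [Finset.mem_filter, Finset.mem_univ, true_and, Finset.mem_map,
      Fin.castLEEmb_apply]
    constructor
    · intro h; exact ⟨⟨j, h⟩, rfl⟩
    · rintro ⟨a, rfl⟩; exact a.isLt
  rw [this, Finset.card_map, Finset.card_univ, Fintype.card_fin]

theorem stmt10 {Ω : Type*} [MeasureSpace Ω] [IsProbabilityMeasure (ℙ : Measure Ω)]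
    (N : ℕ) (hN : 1 ≤ N) (U : Fin N → Ω → ℝ) (hmeas : ∀ i, Measurable (U i))
    (hindep : iIndepFun U ℙ)
    (hdist : ∀ i, Measure.map (U i) ℙ = (volume : Measure ℝ).restrict (Set.Icc 0 1))
    (δ : ℝ) (hδ : δ ∈ Set.Ioo (0 : ℝ) 1) (NP : ℕ) (hNP : 1 ≤ NP) (hle : NP ≤ N) :
    ℙ {ω | ∃ i : Fin N, (i : ℕ) < NP ∧
        orderStatAsc (fun k => U k ω) i ≤
          (((i : ℕ) + 1 : ℝ) / (Real.exp 1 * N)) *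
            (δ / NP) ^ (1 / ((i : ℕ) + 1 : ℝ))} ≤ ENNReal.ofReal δ := by
  obtain ⟨hδ0, hδ1⟩ := hδ
  have hN0 : (0:ℝ) < N := by exact_mod_cast hN
  have hNP0 : (0:ℝ) < NP := by exact_mod_cast hNP
  set t : ℕ → ℝ := fun k => ((k:ℝ) / (Real.exp 1 * N)) * (δ / NP) ^ ((k:ℝ)⁻¹) with ht_def
  have ht0 : ∀ k : ℕ, 0 ≤ t k := by
    intro k
    have : (0:ℝ) ≤ (δ / NP) ^ ((k:ℝ)⁻¹) := Real.rpow_nonneg (by positivity) _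
    positivity
  have ht1 : ∀ k : ℕ, k ≤ N → t k ≤ 1 := by
    intro k hkN
    have h1 : (δ / NP) ^ ((k:ℝ)⁻¹) ≤ 1 := by
      apply Real.rpow_le_one (by positivity) ?_ (by positivity)
      rw [div_le_one hNP0]
      calc δ ≤ 1 := hδ1.le
        _ ≤ (NP:ℝ) := by exact_mod_cast hNP
    have h2 : (k:ℝ) / (Real.exp 1 * N) ≤ 1 := by
      rw [div_le_one (by positivity)]
      calc (k:ℝ) ≤ (N:ℝ) := by exact_mod_cast hkN
        _ = 1 * N := (one_mul _).symm
        _ ≤ Real.exp 1 * N := by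
            apply mul_le_mul_of_nonneg_right ?_ hN0.le
            linarith [Real.add_one_le_exp 1, Real.exp_pos 1]
    calc t k ≤ 1 * 1 := mul_le_mul h2 h1 (Real.rpow_nonneg (by positivity) _) (by norm_num)
      _ = 1 := one_mul 1
  -- uniform distribution of each coordinate
  have huni : ∀ (j : Fin N) (s : ℝ), 0 ≤ s → s ≤ 1 →
      ℙ (U j ⁻¹' Set.Iic s) = ENNReal.ofReal s := by
    intro j s h0 h1
    rw [← Measure.map_apply (hmeas j) measurableSet_Iic, hdist j,
      Measure.restrict_apply measurableSet_Iic]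
    have : Set.Iic s ∩ Set.Icc 0 1 = Set.Icc 0 s := by
      ext x
      simp only [Set.mem_inter_iff, Set.mem_Iic, Set.mem_Icc]
      constructor
      · rintro ⟨a, b, c⟩; exact ⟨b, a⟩
      · rintro ⟨a, b⟩; exact ⟨b, a, b.trans h1⟩
    rw [this, Real.volume_Icc, sub_zero]
  set F : Finset (Fin N) := Finset.univ.filter (fun i : Fin N => (i : ℕ) < NP) with hF
  -- the union bound decomposition
  have hsub : {ω | ∃ i : Fin N, (i : ℕ) < NP ∧
        orderStatAsc (fun k => U k ω) i ≤
          (((i : ℕ) + 1 : ℝ) / (Real.exp 1 * N)) *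
            (δ / NP) ^ (1 / ((i : ℕ) + 1 : ℝ))}
      ⊆ ⋃ i ∈ F, ⋃ S ∈ Finset.powersetCard ((i:ℕ)+1) Finset.univ,
          ⋂ j ∈ S, U j ⁻¹' Set.Iic (t ((i:ℕ)+1)) := by
    intro ω hω
    obtain ⟨i, hi, hord⟩ := hω
    have hteq : (((i : ℕ) + 1 : ℝ) / (Real.exp 1 * N)) *
        (δ / NP) ^ (1 / ((i : ℕ) + 1 : ℝ)) = t ((i:ℕ)+1) := by
      rw [ht_def]
      push_cast
      rw [one_div]
    rw [hteq] at hord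
    obtain ⟨S, hScard, hS⟩ := orderStat_subset _ i _ hord
    refine Set.mem_iUnion₂.mpr ⟨i, ?_, Set.mem_iUnion₂.mpr ⟨S, ?_, ?_⟩⟩
    · simp [hF, hi]
    · simp [Finset.mem_powersetCard, hScard]
    · exact Set.mem_iInter₂.mpr fun j hj => hS j hj
  refine le_trans (measure_mono hsub) ?_
  refine le_trans (measure_biUnion_finset_le _ _) ?_
  have hstep : ∀ i ∈ F,
      ℙ (⋃ S ∈ Finset.powersetCard ((i:ℕ)+1) Finset.univ,
          ⋂ j ∈ S, U j ⁻¹' Set.Iic (t ((i:ℕ)+1))) ≤ ENNReal.ofReal (δ / NP) := by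
    intro i hiF
    have hiNP : (i:ℕ) < NP := by simpa [hF] using hiF
    set k := (i:ℕ) + 1 with hk
    have hkN : k ≤ N := i.isLt
    refine le_trans (measure_biUnion_finset_le _ _) ?_
    have hprod : ∀ S ∈ Finset.powersetCard k (Finset.univ : Finset (Fin N)),
        ℙ (⋂ j ∈ S, U j ⁻¹' Set.Iic (t k)) = ENNReal.ofReal (t k) ^ k := by
      intro S hSmem
      have hScard : S.card = k := (Finset.mem_powersetCard.mp hSmem).2
      rw [hindep.meas_biInter (fun j _ => ⟨Set.Iic (t k), measurableSet_Iic, rfl⟩)]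
      rw [Finset.prod_congr rfl (fun j _ => huni j (t k) (ht0 k) (ht1 k hkN)),
        Finset.prod_const, hScard]
    rw [Finset.sum_congr rfl hprod, Finset.sum_const, Finset.card_powersetCard,
      Finset.card_univ, Fintype.card_fin, nsmul_eq_mul]
    calc (N.choose k : ℝ≥0∞) * ENNReal.ofReal (t k) ^ k
        = ENNReal.ofReal ((N.choose k : ℝ) * t k ^ k) := by
          rw [← ENNReal.ofReal_pow (ht0 k), ← ENNReal.ofReal_natCast (N.choose k),
            ← ENNReal.ofReal_mul (by positivity)]
      _ ≤ ENNReal.ofReal (δ / NP) := by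
          apply ENNReal.ofReal_le_ofReal
          exact core_ineq N k NP δ hδ0 (by omega) hkN
  refine le_trans (Finset.sum_le_sum hstep) ?_
  rw [Finset.sum_const, card_filter_lt hle, nsmul_eq_mul, ← ENNReal.ofReal_natCast NP,
    ← ENNReal.ofReal_mul (by positivity), mul_div_cancel₀ _ (ne_of_gt hNP0)]
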